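/- Let k ≥ 2, let B be the binary k×k matrix whose j-th column equals e_j for 1 ≤ j ≤ k−1 and whose k-th column is the all-ones vector (so that x·B = (x_1, …, x_{k−1}, x_1 + ⋯ + x_k)), and let G = [B | B | B] be the k×3k matrix consisting of three copies of B. Then: (1) viewed as an LRC, G has locality 1 and availability 2 of all symbols, i.e., every column of G appears in three pairwise distinct positions, so each coded symbol can be recovered from either of 2 disjoint single-symbol recovery sets; (2) viewed as a batch or PIR code, any set T of column indices of G for which the sum of the columns of G indexed by T equals the standard basis column vector e_k satisfies |T| ≥ k; hence the size of reconstruction sets for the information symbol x_k is at least k. -/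

import Mathlib

/-- The triple-replicated code `G = [B | B | B]`, where `B` has columns
`e_1, …, e_{k−1}` and the all-ones column: viewed as an LRC it has locality `1` and
availability `2` of all symbols, but viewed as a batch/PIR code every reconstruction set
for the information symbol `x_k` has size at least `k`. -/
theorem replication_LRC_not_batch (k : ℕ) (hk : 2 ≤ k)
    (B : Matrix (Fin k) (Fin k) (ZMod 2))
    (hB : ∀ i j : Fin k, B i j = if (j : ℕ) < k - 1 then (if i = j then 1 else 0) else 1)
    (G : Matrix (Fin k) (Fin 3 × Fin k) (ZMod 2))
    (hG : ∀ (i : Fin k) (c : Fin 3) (j : Fin k), G i (c, j) = B i j) :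
    -- (1) every column of `G` appears in three pairwise distinct positions, so each coded
    -- symbol has two disjoint single-symbol recovery sets (locality 1, availability 2):
    (∀ p : Fin 3 × Fin k, ∃ p₁ p₂ : Fin 3 × Fin k,
        p₁ ≠ p ∧ p₂ ≠ p ∧ p₁ ≠ p₂ ∧
        (∀ i : Fin k, G i p₁ = G i p) ∧ (∀ i : Fin k, G i p₂ = G i p)) ∧
    -- (2) any set `T` of columns of `G` summing to `e_k` has size at least `k`:
    (∀ T : Finset (Fin 3 × Fin k),
        ∑ p ∈ T, G.transpose p = Pi.single (⟨k - 1, by omega⟩ : Fin k) 1 →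
        k ≤ T.card) := by
  have hL : k - 1 < k := by omega
  set L : Fin k := ⟨k - 1, hL⟩ with hLdef
  constructor
  · rintro ⟨c, j⟩
    have hcols : ∀ (c₁ c₂ : Fin 3) (i : Fin k), G i (c₁, j) = G i (c₂, j) := by
      intro c₁ c₂ i; rw [hG, hG]
    fin_cases c
    · exact ⟨(1, j), (2, j), by simp [Prod.ext_iff], by simp [Prod.ext_iff],
        by simp [Prod.ext_iff], fun i => hcols 1 0 i, fun i => hcols 2 0 i⟩
    · exact ⟨(0, j), (2, j), by simp [Prod.ext_iff], by simp [Prod.ext_iff],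
        by simp [Prod.ext_iff], fun i => hcols 0 1 i, fun i => hcols 2 1 i⟩
    · exact ⟨(0, j), (1, j), by simp [Prod.ext_iff], by simp [Prod.ext_iff],
        by simp [Prod.ext_iff], fun i => hcols 0 2 i, fun i => hcols 1 2 i⟩
  · intro T hT
    have hGval : ∀ (i : Fin k) (p : Fin 3 × Fin k),
        G i p = (if p.2 = L then 1 else if i = p.2 then 1 else 0) := by
      rintro i ⟨c, j⟩
      rw [hG, hB]
      by_cases h : (j : ℕ) < k - 1
      · have hjL : j ≠ L := by
          intro e
          rw [e] at h
          simp [hLdef] at h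
        simp [h, hjL]
      · have hjL : j = L := by
          apply Fin.ext
          have := j.isLt
          simp [hLdef]
          omega
        rw [if_neg h]; simp [hjL]
    have key : ∀ i : Fin k, ∑ p ∈ T, G i p = (Pi.single L 1 : Fin k → ZMod 2) i := by
      intro i
      have := congrFun hT i
      simpa [Matrix.transpose_apply] using (Finset.sum_apply i T (fun p => G.transpose p)).symm.trans this
    have hmsum : ∑ p ∈ T, G L p = ((T.filter (fun p => p.2 = L)).card : ZMod 2) := by
      rw [← Finset.sum_boole]
      refine Finset.sum_congr rfl fun p _ => ?_
      rw [hGval]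
      by_cases h : p.2 = L
      · simp [h]
      · simp [h, Ne.symm h]
    have hm : ((T.filter (fun p => p.2 = L)).card : ZMod 2) = 1 := by
      have h1 := key L
      rw [Pi.single_eq_same, hmsum] at h1
      exact h1
    have hfiber : ∀ j : Fin k, 1 ≤ (T.filter (fun p => p.2 = j)).card := by
      intro j
      by_cases hj : j = L
      · rw [hj]
        rcases Nat.eq_zero_or_pos (T.filter (fun p => p.2 = L)).card with h0 | h
        · rw [h0] at hm; simp at hm
        · exact h
      · have h1 := key j
        rw [Pi.single_eq_of_ne hj] at h1
        have hsplit : ∑ p ∈ T, G j p =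
            ((T.filter (fun p => p.2 = L)).card : ZMod 2)
            + ((T.filter (fun p => p.2 = j)).card : ZMod 2) := by
          rw [← Finset.sum_boole, ← Finset.sum_boole, ← Finset.sum_add_distrib]
          refine Finset.sum_congr rfl fun p _ => ?_
          rw [hGval]
          by_cases h : p.2 = L
          · have h2 : ¬ p.2 = j := by rw [h]; exact fun e => hj e.symm
            simp [h, h2, Ne.symm hj]
          · by_cases h2 : p.2 = j
            · rw [if_neg h, if_neg h, if_pos h2, if_pos h2.symm]
              simp
            · simp [h, h2, Ne.symm h2]
        rw [hsplit, hm] at h1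
        have hn : ((T.filter (fun p => p.2 = j)).card : ZMod 2) = 1 := by
          have h2 := eq_neg_of_add_eq_zero_right h1
          rw [h2]; decide
        rcases Nat.eq_zero_or_pos (T.filter (fun p => p.2 = j)).card with h0 | h
        · rw [h0] at hn; simp at hn
        · exact h
    have hcard : T.card = ∑ j : Fin k, (T.filter (fun p => p.2 = j)).card :=
      Finset.card_eq_sum_card_fiberwise (fun p _ => Finset.mem_univ p.2)
    calc k = ∑ _j : Fin k, 1 := by simp
      _ ≤ ∑ j : Fin k, (T.filter (fun p => p.2 = j)).card :=
          Finset.sum_le_sum (fun j _ => hfiber j)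
      _ = T.card := hcard.symm
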